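/- Suppose U_Xᵀ A_ff U_X is invertible, set c1 := U_X (U_Xᵀ A_ff U_X)^{-1} U_Xᵀ, and suppose U_Yᵀ (A_ss − A_sf c1 A_fs) U_Y is invertible, with c2 := U_Y (U_Yᵀ (A_ss − A_sf c1 A_fs) U_Y)^{-1} U_Yᵀ. Then there exists a unique pair (x_p*, y_p*) ∈ X × Y satisfying the projected equations Π_X(A_ff x_p* + A_fs y_p* − b1) = 0 and Π_Y(A_sf x_p* + A_ss y_p* − b2) = 0, and it is given by y_p* = c2 (b2 − A_sf c1 b1) and x_p* = c1 (b1 − A_fs y_p*). -/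
import Mathlib

open Matrix MeasureTheory Finset
open scoped BigOperators

noncomputable section
namespace TTSA

abbrev E (n : ℕ) : Type := EuclideanSpace ℝ (Fin n)

def mv {k l : ℕ} (M : Matrix (Fin k) (Fin l) ℝ) (x : E l) : E k :=
  Matrix.toEuclideanLin M x

def specNorm {k l : ℕ} (M : Matrix (Fin k) (Fin l) ℝ) : ℝ :=
  ‖LinearMap.toContinuousLinearMap (Matrix.toEuclideanLin M)‖

def sigmaMin {k : ℕ} (M : Matrix (Fin k) (Fin k) ℝ) : ℝ :=
  sInf ((fun v : E k => ‖mv M v‖) '' {v | ‖v‖ = 1})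

def resolvent {k l : ℕ} (U : Matrix (Fin k) (Fin l) ℝ) (A : Matrix (Fin k) (Fin k) ℝ) :
    Matrix (Fin k) (Fin k) ℝ :=
  U * (Uᵀ * A * U)⁻¹ * Uᵀ

lemma mv_mul {k l p : ℕ} (M : Matrix (Fin k) (Fin l) ℝ) (N : Matrix (Fin l) (Fin p) ℝ)
    (x : E p) : mv (M * N) x = mv M (mv N x) := by
  simp [mv, Matrix.toEuclideanLin_apply, Matrix.mulVec_mulVec]

lemma mv_add {k l : ℕ} (M : Matrix (Fin k) (Fin l) ℝ) (x y : E l) :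
    mv M (x + y) = mv M x + mv M y := map_add (Matrix.toEuclideanLin M) x y

lemma mv_sub {k l : ℕ} (M : Matrix (Fin k) (Fin l) ℝ) (x y : E l) :
    mv M (x - y) = mv M x - mv M y := map_sub (Matrix.toEuclideanLin M) x y

lemma mv_zero {k l : ℕ} (M : Matrix (Fin k) (Fin l) ℝ) :
    mv M (0 : E l) = 0 := map_zero (Matrix.toEuclideanLin M)

lemma mv_matsub {k l : ℕ} (M N : Matrix (Fin k) (Fin l) ℝ) (x : E l) :
    mv (M - N) x = mv M x - mv N x := by
  simp only [mv, map_sub, LinearMap.sub_apply]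

/-- `resolvent U A * A * U = U`. -/
lemma res_mul_self {k l : ℕ} (U : Matrix (Fin k) (Fin l) ℝ)
    (A : Matrix (Fin k) (Fin k) ℝ) (hA : IsUnit (Uᵀ * A * U)) :
    resolvent U A * A * U = U := by
  have h := Matrix.nonsing_inv_mul _ ((Matrix.isUnit_iff_isUnit_det _).mp hA)
  calc resolvent U A * A * U
      = U * ((Uᵀ * A * U)⁻¹ * (Uᵀ * A * U)) := by
        simp [resolvent, Matrix.mul_assoc]
    _ = U := by rw [h, Matrix.mul_one]

/-- `(U Uᵀ) A (resolvent U A) = U Uᵀ`. -/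
lemma proj_mul_res {k l : ℕ} (U : Matrix (Fin k) (Fin l) ℝ)
    (A : Matrix (Fin k) (Fin k) ℝ) (hA : IsUnit (Uᵀ * A * U)) :
    U * Uᵀ * (A * resolvent U A) = U * Uᵀ := by
  have h := Matrix.mul_nonsing_inv _ ((Matrix.isUnit_iff_isUnit_det _).mp hA)
  calc U * Uᵀ * (A * resolvent U A)
      = U * ((Uᵀ * A * U) * (Uᵀ * A * U)⁻¹) * Uᵀ := by
        simp [resolvent, Matrix.mul_assoc]
    _ = U * Uᵀ := by rw [h, Matrix.mul_one]

/-- `resolvent U A * (U Uᵀ) = resolvent U A` when `Uᵀ U = 1`. -/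
lemma res_mul_proj {k l : ℕ} (U : Matrix (Fin k) (Fin l) ℝ)
    (A : Matrix (Fin k) (Fin k) ℝ) (hU : Uᵀ * U = 1) :
    resolvent U A * (U * Uᵀ) = resolvent U A := by
  calc resolvent U A * (U * Uᵀ)
      = U * (Uᵀ * A * U)⁻¹ * (Uᵀ * U) * Uᵀ := by
        simp [resolvent, Matrix.mul_assoc]
    _ = resolvent U A := by rw [hU, Matrix.mul_one, resolvent]

lemma res_mem_range {k l : ℕ} (U : Matrix (Fin k) (Fin l) ℝ)
    (A : Matrix (Fin k) (Fin k) ℝ) (v : E k) :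
    mv (resolvent U A) v ∈ Set.range (mv U) := by
  refine ⟨mv ((Uᵀ * A * U)⁻¹ * Uᵀ) v, ?_⟩
  rw [← mv_mul]
  simp [resolvent, Matrix.mul_assoc]

/-- existence, uniqueness and explicit form of the constrained
(projected) solution. Here `c1 = U_X (U_Xᵀ A_ff U_X)⁻¹ U_Xᵀ = resolvent U_X A_ff`
and `c2 = resolvent U_Y (A_ss - A_sf c1 A_fs)`. -/
theorem projected_system_unique_solution {n m d r : ℕ}
    (Aff : Matrix (Fin n) (Fin n) ℝ) (Afs : Matrix (Fin n) (Fin m) ℝ)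
    (Asf : Matrix (Fin m) (Fin n) ℝ) (Ass : Matrix (Fin m) (Fin m) ℝ)
    (b1 : E n) (b2 : E m)
    (UX : Matrix (Fin n) (Fin d) ℝ) (UY : Matrix (Fin m) (Fin r) ℝ)
    (hUX : UXᵀ * UX = 1) (hUY : UYᵀ * UY = 1)
    (h1 : IsUnit (UXᵀ * Aff * UX))
    (h2 : IsUnit (UYᵀ * (Ass - Asf * resolvent UX Aff * Afs) * UY)) :
    (∃! p : E n × E m,
        (p.1 ∈ Set.range (mv UX) ∧ p.2 ∈ Set.range (mv UY)) ∧
        mv (UX * UXᵀ) (mv Aff p.1 + mv Afs p.2 - b1) = 0 ∧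
        mv (UY * UYᵀ) (mv Asf p.1 + mv Ass p.2 - b2) = 0) ∧
    (∀ p : E n × E m,
        ((p.1 ∈ Set.range (mv UX) ∧ p.2 ∈ Set.range (mv UY)) ∧
         mv (UX * UXᵀ) (mv Aff p.1 + mv Afs p.2 - b1) = 0 ∧
         mv (UY * UYᵀ) (mv Asf p.1 + mv Ass p.2 - b2) = 0) →
        p.2 = mv (resolvent UY (Ass - Asf * resolvent UX Aff * Afs))
                (b2 - mv (Asf * resolvent UX Aff) b1) ∧
        p.1 = mv (resolvent UX Aff) (b1 - mv Afs p.2)) := by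
  set c1 := resolvent UX Aff with hc1def
  set S := Ass - Asf * c1 * Afs with hSdef
  set c2 := resolvent UY S with hc2def
  set y0 : E m := mv c2 (b2 - mv (Asf * c1) b1) with hy0def
  set x0 : E n := mv c1 (b1 - mv Afs y0) with hx0def
  have R1 : c1 * (UX * UXᵀ) = c1 := by rw [hc1def]; exact res_mul_proj UX Aff hUX
  have R2 : c1 * Aff * UX = UX := by rw [hc1def]; exact res_mul_self UX Aff h1
  have R3 : UX * UXᵀ * (Aff * c1) = UX * UXᵀ := by rw [hc1def]; exact proj_mul_res UX Aff h1
  have Q1 : c2 * (UY * UYᵀ) = c2 := by rw [hc2def]; exact res_mul_proj UY S hUY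
  have Q2 : c2 * S * UY = UY := by rw [hc2def]; exact res_mul_self UY S h2
  have Q3 : UY * UYᵀ * (S * c2) = UY * UYᵀ := by rw [hc2def]; exact proj_mul_res UY S h2
  -- key uniqueness computation
  have hsol : ∀ p : E n × E m,
      ((p.1 ∈ Set.range (mv UX) ∧ p.2 ∈ Set.range (mv UY)) ∧
       mv (UX * UXᵀ) (mv Aff p.1 + mv Afs p.2 - b1) = 0 ∧
       mv (UY * UYᵀ) (mv Asf p.1 + mv Ass p.2 - b2) = 0) →
      p.2 = y0 ∧ p.1 = mv c1 (b1 - mv Afs p.2) := by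
    rintro p ⟨⟨⟨a, ha⟩, ⟨w, hw⟩⟩, e1, e2⟩
    -- apply c1 to the first projected equation
    have hc1e1 : mv c1 (mv Aff p.1) + mv c1 (mv Afs p.2) - mv c1 b1 = 0 := by
      have h := congrArg (mv c1) e1
      rw [← mv_mul, R1, mv_zero, mv_sub, mv_add] at h
      exact h
    have hAffp1 : mv c1 (mv Aff p.1) = p.1 := by
      rw [← ha, ← mv_mul, ← mv_mul, R2]
    have hp1 : p.1 = mv c1 (b1 - mv Afs p.2) := by
      have key1 : p.1 - (mv c1 b1 - mv c1 (mv Afs p.2)) = 0 := by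
        calc p.1 - (mv c1 b1 - mv c1 (mv Afs p.2))
            = mv c1 (mv Aff p.1) - (mv c1 b1 - mv c1 (mv Afs p.2)) :=
              congrArg (fun z => z - (mv c1 b1 - mv c1 (mv Afs p.2))) hAffp1.symm
          _ = mv c1 (mv Aff p.1) + mv c1 (mv Afs p.2) - mv c1 b1 := by abel
          _ = 0 := hc1e1
      rw [mv_sub]
      exact sub_eq_zero.mp key1
    -- apply c2 to the second projected equation
    have hc2e2 : mv c2 (mv (Asf * c1) b1) - mv c2 (mv (Asf * c1 * Afs) p.2)
        + mv c2 (mv Ass p.2) - mv c2 b2 = 0 := by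
      have h := congrArg (mv c2) e2
      have hAsfp1 : mv Asf p.1 = mv (Asf * c1) b1 - mv (Asf * c1 * Afs) p.2 := by
        rw [hp1, ← mv_mul, mv_sub, mv_mul (Asf * c1) Afs]
      rw [← mv_mul, Q1, mv_zero, mv_sub, mv_add, hAsfp1, mv_sub] at h
      exact h
    have hexp : mv c2 (mv Ass p.2) - mv c2 (mv (Asf * c1 * Afs) p.2) = p.2 := by
      rw [← mv_sub, ← mv_matsub Ass (Asf * c1 * Afs) p.2, ← hSdef, ← mv_mul, ← hw,
        ← mv_mul, Q2]
    have hp2 : p.2 = y0 := by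
      have key2 : p.2 - (mv c2 b2 - mv c2 (mv (Asf * c1) b1)) = 0 := by
        calc p.2 - (mv c2 b2 - mv c2 (mv (Asf * c1) b1))
            = (mv c2 (mv Ass p.2) - mv c2 (mv (Asf * c1 * Afs) p.2))
                - (mv c2 b2 - mv c2 (mv (Asf * c1) b1)) :=
              congrArg (fun z => z - (mv c2 b2 - mv c2 (mv (Asf * c1) b1))) hexp.symm
          _ = mv c2 (mv (Asf * c1) b1) - mv c2 (mv (Asf * c1 * Afs) p.2)
                + mv c2 (mv Ass p.2) - mv c2 b2 := by abel
          _ = 0 := hc2e2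
      rw [hy0def, mv_sub]
      exact sub_eq_zero.mp key2
    exact ⟨hp2, hp1⟩
  refine ⟨⟨(x0, y0), ?_, ?_⟩, hsol⟩
  · refine ⟨⟨?_, ?_⟩, ?_, ?_⟩
    · rw [hx0def, hc1def]; exact res_mem_range UX Aff _
    · rw [hy0def, hc2def]; exact res_mem_range UY S _
    · -- first projected equation
      show mv (UX * UXᵀ) (mv Aff x0 + mv Afs y0 - b1) = 0
      have hx : mv (UX * UXᵀ) (mv Aff x0)
          = mv (UX * UXᵀ) b1 - mv (UX * UXᵀ) (mv Afs y0) := by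
        rw [hx0def, ← mv_mul, ← mv_mul,
          show UX * UXᵀ * Aff * c1 = UX * UXᵀ * (Aff * c1) from Matrix.mul_assoc _ _ _,
          R3, mv_sub]
      rw [mv_sub, mv_add, hx]
      abel
    · -- second projected equation
      show mv (UY * UYᵀ) (mv Asf x0 + mv Ass y0 - b2) = 0
      have hAsfx0 : mv Asf x0 = mv (Asf * c1) b1 - mv (Asf * c1 * Afs) y0 := by
        rw [hx0def, ← mv_mul, mv_sub, mv_mul (Asf * c1) Afs]
      have hAssy0 : mv Ass y0 = mv S y0 + mv (Asf * c1 * Afs) y0 := by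
        rw [hSdef, mv_matsub]; abel
      have hSy0 : mv (UY * UYᵀ) (mv S y0)
          = mv (UY * UYᵀ) b2 - mv (UY * UYᵀ) (mv (Asf * c1) b1) := by
        rw [hy0def, ← mv_mul, ← mv_mul,
          show UY * UYᵀ * S * c2 = UY * UYᵀ * (S * c2) from Matrix.mul_assoc _ _ _,
          Q3, mv_sub]
      rw [hAsfx0, hAssy0]
      simp only [mv_add, mv_sub]
      rw [hSy0]
      abel
  · rintro q hq
    obtain ⟨h2', h1'⟩ := hsol q hq
    have hq1 : q.1 = x0 := by rw [h1', h2']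
    exact Prod.ext hq1 h2'

end TTSA
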